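/- Let a : ℕ → ℂ with a(1) = 1, let k be a positive integer, and suppose S is a set of primes such that for every p ∈ S there is a constant λ_p with a(pn) + p^{k-1}·a(n/p) = λ_p·a(n) for all n ≥ 1 (with a(n/p) = 0 if p ∤ n), and λ_p = a(p). Then a(m)a(n) = a(mn) for all coprime m, n ≥ 1 each of whose prime factors lie in S. -/
import Mathlib


theorem hecke_eigen_multiplicative (a : ℕ → ℂ) (ha1 : a 1 = 1) (k : ℕ) (hk : 1 ≤ k)
    (S : Set ℕ) (hS : ∀ p ∈ S, p.Prime)
    (hHecke : ∀ p ∈ S, ∀ n : ℕ, 1 ≤ n →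
      a (p * n) + (p : ℂ) ^ (k - 1) * (if p ∣ n then a (n / p) else 0) = a p * a n) :
    ∀ m n : ℕ, 1 ≤ m → 1 ≤ n → Nat.Coprime m n →
      (∀ q : ℕ, q.Prime → q ∣ m → q ∈ S) → (∀ q : ℕ, q.Prime → q ∣ n → q ∈ S) →
      a m * a n = a (m * n) := by
  intro m
  induction m using Nat.strong_induction_on with
  | _ m IH =>
    intro n hm hn hcop hmS hnS
    rcases eq_or_lt_of_le hm with h1 | h1
    · rw [← h1]; simp [ha1]
    have hp : m.minFac.Prime := Nat.minFac_prime (by omega)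
    set p := m.minFac with hpdef
    obtain ⟨m', hm'⟩ := Nat.minFac_dvd m
    have hpS : p ∈ S := hmS p hp ⟨m', hm'⟩
    have hm'pos : 1 ≤ m' := by
      rcases Nat.eq_zero_or_pos m' with h | h
      · rw [h, Nat.mul_zero] at hm'; omega
      · exact h
    have hm'lt : m' < m := by
      have := hp.two_le; nlinarith [hm'pos]
    have hpn : ¬ p ∣ n := by
      intro h
      have : p ∣ Nat.gcd m n := Nat.dvd_gcd ⟨m', hm'⟩ h
      rw [hcop] at this
      exact hp.one_lt.ne' (Nat.eq_one_of_dvd_one this)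
    have hcop' : Nat.Coprime m' n := Nat.Coprime.coprime_dvd_left ⟨p, by rw [hm']; ring⟩ hcop
    have hm'S : ∀ q : ℕ, q.Prime → q ∣ m' → q ∈ S := fun q hq hd =>
      hmS q hq (hd.trans ⟨p, by rw [hm']; ring⟩)
    have key := hHecke p hpS (m' * n) (Nat.one_le_iff_ne_zero.mpr (by positivity))
    have key' := hHecke p hpS m' hm'pos
    have hIH1 : a m' * a n = a (m' * n) := IH m' hm'lt n hm'pos hn hcop' hm'S hnS
    have hpmn : p ∣ m' * n ↔ p ∣ m' := by
      constructor
      · intro h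
        rcases (hp.dvd_mul).mp h with h | h
        · exact h
        · exact absurd h hpn
      · exact fun h => h.mul_right n
    by_cases hpm' : p ∣ m'
    · obtain ⟨m'', hm''⟩ := hpm'
      have hm''pos : 1 ≤ m'' := by
        rcases Nat.eq_zero_or_pos m'' with h | h
        · rw [h, Nat.mul_zero] at hm''; omega
        · exact h
      have hm''lt : m'' < m := by
        have := hp.two_le; nlinarith
      have hcop'' : Nat.Coprime m'' n :=
        Nat.Coprime.coprime_dvd_left ⟨p, by rw [hm'']; ring⟩ hcop'
      have hm''S : ∀ q : ℕ, q.Prime → q ∣ m'' → q ∈ S := fun q hq hd =>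
        hm'S q hq (hd.trans ⟨p, by rw [hm'']; ring⟩)
      have hIH2 : a m'' * a n = a (m'' * n) := IH m'' hm''lt n hm''pos hn hcop'' hm''S hnS
      have hdvd : p ∣ m' * n := ⟨m'' * n, by rw [hm'']; ring⟩
      have hdiv1 : m' * n / p = m'' * n := by
        rw [hm'']; rw [Nat.mul_assoc, Nat.mul_div_cancel_left _ hp.pos]
      have hdiv2 : m' / p = m'' := by
        rw [hm'', Nat.mul_div_cancel_left _ hp.pos]
      rw [if_pos hdvd, hdiv1] at key
      rw [if_pos ⟨m'', hm''⟩, hdiv2] at key'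
      have : m * n = p * (m' * n) := by rw [hm']; ring
      rw [this, hm']
      have e1 : a (p * (m' * n)) = a p * a (m' * n) - (p : ℂ) ^ (k-1) * a (m'' * n) := by
        linear_combination key
      rw [e1, ← hIH1, ← hIH2]
      have e2 : a (p * m') = a p * a m' - (p : ℂ) ^ (k-1) * a m'' := by
        linear_combination key'
      rw [e2]; ring
    · have hnd : ¬ p ∣ m' * n := fun h => hpm' (hpmn.mp h)
      rw [if_neg hnd] at key
      rw [if_neg hpm'] at key'
      have : m * n = p * (m' * n) := by rw [hm']; ring
      rw [this, hm']
      have e1 : a (p * (m' * n)) = a p * a (m' * n) := by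
        have := key; simp at this ⊢; linear_combination this
      have e2 : a (p * m') = a p * a m' := by
        have := key'; simp at this; linear_combination this
      rw [e1, e2, ← hIH1]; ring
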